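/- Let A : H1 → H2 be a nonzero bounded linear operator between real Hilbert spaces. Then the range of A is closed if and only if the range of A*A is closed, and in that case |A| = √(|A*A|). -/

import Mathlib

open scoped RealInnerProductSpace

noncomputable def minNorm {H1 H2 : Type*} [NormedAddCommGroup H1] [InnerProductSpace ℝ H1]
    [NormedAddCommGroup H2] [InnerProductSpace ℝ H2] (A : H1 →L[ℝ] H2) : ℝ :=
  sInf ((fun x => ‖A x‖) '' {x : H1 | x ∈ (LinearMap.ker (A : H1 →ₗ[ℝ] H2))ᗮ ∧ ‖x‖ = 1})

namespace StmtAux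
set_option maxHeartbeats 1600000
set_option synthInstance.maxHeartbeats 400000

set_option linter.unusedSectionVars false

variable {H1 H2 : Type*} [NormedAddCommGroup H1] [InnerProductSpace ℝ H1]
    [NormedAddCommGroup H2] [InnerProductSpace ℝ H2]
    [CompleteSpace H1] [CompleteSpace H2]

lemma range_eq_image (B : H1 →L[ℝ] H2) :
    Set.range B = B '' ((LinearMap.ker (B : H1 →ₗ[ℝ] H2))ᗮ : Set H1) := by
  apply Set.Subset.antisymm
  · rintro _ ⟨x, rfl⟩
    haveI : CompleteSpace (LinearMap.ker (B : H1 →ₗ[ℝ] H2)) := B.isClosed_ker.completeSpace_coe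
    obtain ⟨y, hy, z, hz, rfl⟩ := (LinearMap.ker (B : H1 →ₗ[ℝ] H2)).exists_add_mem_mem_orthogonal x
    refine ⟨z, hz, ?_⟩
    rw [LinearMap.mem_ker, ContinuousLinearMap.coe_coe] at hy
    simp [map_add, hy]
  · rintro _ ⟨x, _, rfl⟩; exact ⟨x, rfl⟩

lemma closed_of_bb (B : H1 →L[ℝ] H2) (c : ℝ) (hc : 0 < c)
    (h : ∀ x ∈ (LinearMap.ker (B : H1 →ₗ[ℝ] H2))ᗮ, c * ‖x‖ ≤ ‖B x‖) :
    IsClosed (Set.range B) := by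
  set K := (LinearMap.ker (B : H1 →ₗ[ℝ] H2))ᗮ
  haveI : CompleteSpace K := (LinearMap.ker (B : H1 →ₗ[ℝ] H2)).isClosed_orthogonal.completeSpace_coe
  rw [range_eq_image]
  have himg : B '' (K : Set H1) = Set.range (B.comp K.subtypeL) := by
    ext y; constructor
    · rintro ⟨x, hx, rfl⟩; exact ⟨⟨x, hx⟩, rfl⟩
    · rintro ⟨x, rfl⟩; exact ⟨x.1, x.2, rfl⟩
  rw [himg]
  have anti : AntilipschitzWith (Real.toNNReal c)⁻¹ (B.comp K.subtypeL) := by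
    apply ContinuousLinearMap.antilipschitz_of_bound
    intro x
    have := h x.1 x.2
    rw [NNReal.coe_inv, Real.coe_toNNReal _ hc.le, le_inv_mul_iff₀ (by exact_mod_cast hc)]
    simpa using this
  exact anti.isClosed_range (B.comp K.subtypeL).uniformContinuous

noncomputable def restEquiv (B : H1 →L[ℝ] H2) (h : IsClosed (Set.range B)) :
    ((LinearMap.ker (B : H1 →ₗ[ℝ] H2))ᗮ : Submodule ℝ H1) ≃L[ℝ] (LinearMap.range (B : H1 →ₗ[ℝ] H2) : Submodule ℝ H2) := by
  set K := (LinearMap.ker (B : H1 →ₗ[ℝ] H2))ᗮ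
  haveI : CompleteSpace K := (LinearMap.ker (B : H1 →ₗ[ℝ] H2)).isClosed_orthogonal.completeSpace_coe
  haveI : CompleteSpace (LinearMap.range (B : H1 →ₗ[ℝ] H2) : Submodule ℝ H2) := by
    refine IsClosed.completeSpace_coe (hs := ?_)
    have : (LinearMap.range (B : H1 →ₗ[ℝ] H2) : Set H2) = Set.range B := by
      ext y; simp [LinearMap.mem_range]
    rw [this]; exact h
  refine ContinuousLinearEquiv.ofBijective
    ((B.comp K.subtypeL).codRestrict (LinearMap.range (B : H1 →ₗ[ℝ] H2))
      (fun x => LinearMap.mem_range.2 ⟨x.1, rfl⟩)) ?_ ?_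
  · rw [LinearMap.ker_eq_bot']
    intro x hx
    have hx' : (x : H1) ∈ LinearMap.ker (B : H1 →ₗ[ℝ] H2) := by
      have := congrArg Subtype.val hx
      simpa [LinearMap.mem_ker] using this
    have : (x : H1) = 0 := by
      have := (Submodule.orthogonal_disjoint (LinearMap.ker (B : H1 →ₗ[ℝ] H2))).le_bot
        (Submodule.mem_inf.2 ⟨hx', x.2⟩)
      simpa using this
    exact Subtype.ext this
  · rw [LinearMap.range_eq_top]
    rintro ⟨y, hy⟩
    obtain ⟨x, rfl⟩ := LinearMap.mem_range.1 hy
    haveI : CompleteSpace (LinearMap.ker (B : H1 →ₗ[ℝ] H2)) := B.isClosed_ker.completeSpace_coe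
    obtain ⟨u, hu, z, hz, rfl⟩ := (LinearMap.ker (B : H1 →ₗ[ℝ] H2)).exists_add_mem_mem_orthogonal x
    refine ⟨⟨z, hz⟩, ?_⟩
    apply Subtype.ext
    rw [LinearMap.mem_ker, ContinuousLinearMap.coe_coe] at hu
    simp [map_add, hu]

lemma restEquiv_apply (B : H1 →L[ℝ] H2) (h : IsClosed (Set.range B))
    (x : ((LinearMap.ker (B : H1 →ₗ[ℝ] H2))ᗮ : Submodule ℝ H1)) :
    ((restEquiv B h x : LinearMap.range (B : H1 →ₗ[ℝ] H2)) : H2) = B x.1 := rfl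

lemma bb_of_closed (B : H1 →L[ℝ] H2) (h : IsClosed (Set.range B)) :
    ∃ c > 0, ∀ x ∈ (LinearMap.ker (B : H1 →ₗ[ℝ] H2))ᗮ, c * ‖x‖ ≤ ‖B x‖ := by
  set K := (LinearMap.ker (B : H1 →ₗ[ℝ] H2))ᗮ
  haveI : CompleteSpace K := (LinearMap.ker (B : H1 →ₗ[ℝ] H2)).isClosed_orthogonal.completeSpace_coe
  haveI : CompleteSpace (LinearMap.range (B : H1 →ₗ[ℝ] H2) : Submodule ℝ H2) := by
    refine IsClosed.completeSpace_coe (hs := ?_)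
    have : (LinearMap.range (B : H1 →ₗ[ℝ] H2) : Set H2) = Set.range B := by
      ext y; simp [LinearMap.mem_range]
    rw [this]; exact h
  set e := restEquiv B h
  set M := ‖(e.symm : (LinearMap.range (B : H1 →ₗ[ℝ] H2) : Submodule ℝ H2) →L[ℝ] K)‖ with hM
  have hM0 : 0 ≤ M := by rw [hM]; exact norm_nonneg ((e.symm : (LinearMap.range (B : H1 →ₗ[ℝ] H2) : Submodule ℝ H2) →L[ℝ] K))
  refine ⟨(M + 1)⁻¹, by positivity, fun x hx => ?_⟩
  have key : ‖x‖ ≤ (M + 1) * ‖B x‖ := by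
    have h1 : (⟨x, hx⟩ : K) = e.symm (e ⟨x, hx⟩) := (e.symm_apply_apply _).symm
    have h2 : ‖e.symm (e ⟨x, hx⟩)‖ ≤ M * ‖e ⟨x, hx⟩‖ :=
      (e.symm : (LinearMap.range (B : H1 →ₗ[ℝ] H2) : Submodule ℝ H2) →L[ℝ] K).le_opNorm _
    have h3 : ‖e ⟨x, hx⟩‖ = ‖B x‖ := rfl
    have h5 : ‖x‖ ≤ M * ‖B x‖ := by
      calc ‖x‖ = ‖(⟨x, hx⟩ : K)‖ := rfl
        _ = ‖e.symm (e ⟨x, hx⟩)‖ := by rw [← h1]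
        _ ≤ M * ‖e ⟨x, hx⟩‖ := h2
        _ = M * ‖B x‖ := by rw [h3]
    nlinarith [norm_nonneg (B x)]
  rw [inv_mul_le_iff₀ (by positivity)]
  linarith

lemma realaux2 {r a b : ℝ} (hr : 0 < r) (hb : 0 < b) (h : r * a < b) (ha : 0 ≤ a) :
    b⁻¹ * a < r⁻¹ := by
  rw [inv_mul_lt_iff₀ hb]
  have : a < b / r := (lt_div_iff₀ hr).2 (by nlinarith)
  calc a < b / r := this
    _ = b * r⁻¹ := by rw [div_eq_mul_inv]

lemma realaux {a b N : ℝ} (hN : 0 < N) (h1 : 1 ≤ a * b) (h2 : a ^ 2 ≤ N)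
    (ha : 0 ≤ a) (hb : 0 ≤ b) : N⁻¹ ≤ b ^ 2 := by
  rw [inv_eq_one_div, div_le_iff₀ hN]
  nlinarith [mul_le_mul_of_nonneg_right h2 (sq_nonneg b)]

end StmtAux

set_option linter.unusedVariables false
set_option maxHeartbeats 1600000
set_option synthInstance.maxHeartbeats 400000

theorem stmt2 {H1 H2 : Type*} [NormedAddCommGroup H1] [InnerProductSpace ℝ H1]
    [NormedAddCommGroup H2] [InnerProductSpace ℝ H2]
    [CompleteSpace H1] [CompleteSpace H2]
    (A : H1 →L[ℝ] H2) (hA : A ≠ 0) :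
    (IsClosed (Set.range A) ↔
      IsClosed (Set.range ((ContinuousLinearMap.adjoint A).comp A))) ∧
    (IsClosed (Set.range A) →
      minNorm A = Real.sqrt (minNorm ((ContinuousLinearMap.adjoint A).comp A))) := by
  set T := (ContinuousLinearMap.adjoint A).comp A with hT
  have hinner : ∀ x y : H1, ⟪T x, y⟫ = ⟪A x, A y⟫ := fun x y => by
    rw [hT]; exact ContinuousLinearMap.adjoint_inner_left A y (A x)
  have hker : LinearMap.ker (T : H1 →ₗ[ℝ] H1) = LinearMap.ker (A : H1 →ₗ[ℝ] H2) := by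
    ext x
    simp only [LinearMap.mem_ker, ContinuousLinearMap.coe_coe]
    constructor
    · intro hx
      have h0 : ⟪A x, A x⟫ = 0 := by rw [← hinner x x, hx, inner_zero_left]
      exact inner_self_eq_zero.1 h0
    · intro hx
      rw [hT]; simp [hx]
  constructor
  · constructor
    · intro h
      obtain ⟨c, hc, hbb⟩ := StmtAux.bb_of_closed A h
      apply StmtAux.closed_of_bb T (c ^ 2) (by positivity)
      intro x hx
      rw [hker] at hx
      have h1 : c * ‖x‖ ≤ ‖A x‖ := hbb x hx
      have h2 : ‖A x‖ ^ 2 = ⟪T x, x⟫ := by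
        rw [hinner x x, real_inner_self_eq_norm_sq]
      have h3 : ⟪T x, x⟫ ≤ ‖T x‖ * ‖x‖ := real_inner_le_norm _ _
      rcases eq_or_ne x 0 with rfl | hx0
      · simp
      · have hxn : 0 < ‖x‖ := norm_pos_iff.2 hx0
        have h4 : c ^ 2 * ‖x‖ * ‖x‖ ≤ ‖T x‖ * ‖x‖ := by nlinarith [norm_nonneg (A x), mul_nonneg hc.le (norm_nonneg x)]
        exact le_of_mul_le_mul_right h4 hxn
    · intro h
      obtain ⟨c, hc, hbb⟩ := StmtAux.bb_of_closed T h
      set M := ‖ContinuousLinearMap.adjoint A‖ with hM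
      have hM0 : 0 ≤ M := norm_nonneg _
      apply StmtAux.closed_of_bb A (c / (M + 1)) (by positivity)
      intro x hx
      rw [← hker] at hx
      have h1 : c * ‖x‖ ≤ ‖T x‖ := hbb x hx
      have h2 : ‖T x‖ ≤ M * ‖A x‖ := by
        rw [hT]
        exact (ContinuousLinearMap.adjoint A).le_opNorm (A x)
      rw [div_mul_eq_mul_div, div_le_iff₀ (by positivity)]
      nlinarith [norm_nonneg (A x), norm_nonneg x]
  · intro hcl
    set K : Submodule ℝ H1 := (LinearMap.ker (A : H1 →ₗ[ℝ] H2))ᗮ with hK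
    haveI : CompleteSpace K := (LinearMap.ker (A : H1 →ₗ[ℝ] H2)).isClosed_orthogonal.completeSpace_coe
    haveI : CompleteSpace (LinearMap.range (A : H1 →ₗ[ℝ] H2) : Submodule ℝ H2) := by
      refine IsClosed.completeSpace_coe (hs := ?_)
      have : (LinearMap.range (A : H1 →ₗ[ℝ] H2) : Set H2) = Set.range A := by ext y; simp [LinearMap.mem_range]
      rw [this]; exact hcl
    set e := StmtAux.restEquiv A hcl with he
    set f : K →L[ℝ] (LinearMap.range (A : H1 →ₗ[ℝ] H2) : Submodule ℝ H2) := e.toContinuousLinearMap with hf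
    set g : (LinearMap.range (A : H1 →ₗ[ℝ] H2) : Submodule ℝ H2) →L[ℝ] K := e.symm.toContinuousLinearMap with hg
    have hgf : g.comp f = ContinuousLinearMap.id ℝ K := by
      ext x; simp [hf, hg]
    have haf : (ContinuousLinearMap.adjoint f).comp (ContinuousLinearMap.adjoint g)
        = ContinuousLinearMap.id ℝ K := by
      rw [← ContinuousLinearMap.adjoint_comp, hgf, ContinuousLinearMap.adjoint_id]
    -- the operator S on K
    have hTmem : ∀ x : K, T x.1 ∈ K := by
      intro x
      show T x.1 ∈ (LinearMap.ker (A : H1 →ₗ[ℝ] H2))ᗮ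
      rw [Submodule.mem_orthogonal]
      intro u hu
      rw [LinearMap.mem_ker, ContinuousLinearMap.coe_coe] at hu
      rw [real_inner_comm, hinner, hu, inner_zero_right]
    set S : K →L[ℝ] K := (T.comp K.subtypeL).codRestrict K hTmem with hS
    have hSapp : ∀ w : K, ((S w : K) : H1) = T w.1 := fun w => rfl
    have hSf : ∀ x : K, S x = (ContinuousLinearMap.adjoint f) (f x) := by
      intro x
      apply ext_inner_right ℝ
      intro z
      have lhs : ⟪S x, z⟫ = ⟪A (x : H1), A (z : H1)⟫ := by
        rw [Submodule.coe_inner, hSapp, hinner]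
      have rhs : ⟪(ContinuousLinearMap.adjoint f) (f x), z⟫ = ⟪A (x : H1), A (z : H1)⟫ := by
        rw [ContinuousLinearMap.adjoint_inner_left, Submodule.coe_inner]
        simp only [hf, ContinuousLinearEquiv.coe_coe, he]
        rw [StmtAux.restEquiv_apply A hcl x, StmtAux.restEquiv_apply A hcl z]
      rw [lhs, rhs]
    have hSsurj : Function.Surjective S := by
      intro y
      refine ⟨e.symm ((ContinuousLinearMap.adjoint g) y), ?_⟩
      rw [hSf]
      have h1 : f (e.symm ((ContinuousLinearMap.adjoint g) y))
          = (ContinuousLinearMap.adjoint g) y := by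
        simp only [hf, ContinuousLinearEquiv.coe_coe]
        exact e.apply_symm_apply _
      rw [h1]
      exact DFunLike.congr_fun haf y
    have hSinj : LinearMap.ker (S : K →ₗ[ℝ] K) = ⊥ := by
      rw [LinearMap.ker_eq_bot']
      intro x hx
      have h0 : T x.1 = 0 := by rw [← hSapp x, show S x = 0 from hx]; rfl
      have hxker : x.1 ∈ LinearMap.ker (A : H1 →ₗ[ℝ] H2) := by
        rw [LinearMap.mem_ker]
        have : ⟪A x.1, A x.1⟫ = 0 := by rw [← hinner, h0, inner_zero_left]
        exact inner_self_eq_zero.1 this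
      have : x.1 = 0 := by
        have := (Submodule.orthogonal_disjoint (LinearMap.ker (A : H1 →ₗ[ℝ] H2))).le_bot
          (Submodule.mem_inf.2 ⟨hxker, x.2⟩)
        simpa using this
      exact Subtype.ext this
    set Seq := ContinuousLinearEquiv.ofBijective S hSinj (LinearMap.range_eq_top.2 hSsurj) with hSeq
    have hSeqapp : ∀ w : K, Seq w = S w := fun w => rfl
    set Sinv : K →L[ℝ] K := Seq.symm.toContinuousLinearMap with hSinv
    set N := ‖Sinv‖ with hN
    have hSSinv : ∀ y : K, S (Sinv y) = y := by
      intro y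
      rw [← hSeqapp]
      exact Seq.apply_symm_apply y
    clear_value e f g S Seq Sinv

    -- nontriviality
    haveI : CompleteSpace (LinearMap.ker (A : H1 →ₗ[ℝ] H2)) := A.isClosed_ker.completeSpace_coe
    have hKne : K ≠ ⊥ := by
      intro hbot
      apply hA
      have hker_top : LinearMap.ker (A : H1 →ₗ[ℝ] H2) = ⊤ := (Submodule.orthogonal_eq_bot_iff).1 hbot
      ext x
      have : x ∈ LinearMap.ker (A : H1 →ₗ[ℝ] H2) := hker_top ▸ Submodule.mem_top
      rw [LinearMap.mem_ker, ContinuousLinearMap.coe_coe] at this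
      simp [this]
    obtain ⟨x0, hx0K, hx0⟩ := Submodule.ne_bot_iff K |>.1 hKne
    have hx0n : 0 < ‖x0‖ := norm_pos_iff.2 hx0
    set u0 : H1 := ‖x0‖⁻¹ • x0 with hu0def
    have hu0K : u0 ∈ K := K.smul_mem _ hx0K
    have hu0 : ‖u0‖ = 1 := by
      rw [hu0def, norm_smul, norm_inv, norm_norm, inv_mul_cancel₀ hx0n.ne']
    -- kernel equality
    have hker2 : LinearMap.ker (T : H1 →ₗ[ℝ] H1) = LinearMap.ker (A : H1 →ₗ[ℝ] H2) := by
      ext x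
      simp only [LinearMap.mem_ker, ContinuousLinearMap.coe_coe]
      constructor
      · intro hx
        have h0 : ⟪A x, A x⟫ = 0 := by rw [← hinner x x, hx, inner_zero_left]
        exact inner_self_eq_zero.1 h0
      · intro hx
        rw [hT]; simp [hx]
    -- the two sets
    set sA := ((fun x => ‖A x‖) '' {x : H1 | x ∈ (LinearMap.ker (A : H1 →ₗ[ℝ] H2))ᗮ ∧ ‖x‖ = 1}) with hsA
    set sT := ((fun x => ‖T x‖) '' {x : H1 | x ∈ (LinearMap.ker (T : H1 →ₗ[ℝ] H1))ᗮ ∧ ‖x‖ = 1}) with hsT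
    have hneA : sA.Nonempty := ⟨‖A u0‖, u0, ⟨hu0K, hu0⟩, rfl⟩
    have hneT : sT.Nonempty := ⟨‖T u0‖, u0, ⟨by rw [hker2]; exact hu0K, hu0⟩, rfl⟩
    have hbddA : BddBelow sA := ⟨0, by rintro _ ⟨x, _, rfl⟩; exact norm_nonneg _⟩
    have hbddT : BddBelow sT := ⟨0, by rintro _ ⟨x, _, rfl⟩; exact norm_nonneg _⟩
    set c := sInf sA with hc
    set m := sInf sT with hm
    have hcle : ∀ x ∈ K, ‖x‖ = 1 → c ≤ ‖A x‖ := fun x hx h1 =>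
      csInf_le hbddA ⟨x, ⟨hx, h1⟩, rfl⟩
    have hc_pos : 0 < c := by
      obtain ⟨c0, hc0, hbb⟩ := StmtAux.bb_of_closed A hcl
      have : c0 ≤ c := by
        apply le_csInf hneA
        rintro _ ⟨x, ⟨hx, h1⟩, rfl⟩
        have := hbb x hx
        rw [h1, mul_one] at this
        exact this
      linarith
    -- m ≥ c^2
    have hmc2 : c ^ 2 ≤ m := by
      apply le_csInf hneT
      rintro _ ⟨x, ⟨hx, h1⟩, rfl⟩
      rw [hker2] at hx
      have h2 : c ≤ ‖A x‖ := hcle x hx h1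
      have h3 : ‖A x‖ ^ 2 = ⟪T x, x⟫ := by rw [hinner x x, real_inner_self_eq_norm_sq]
      have h4 : ⟪T x, x⟫ ≤ ‖T x‖ * ‖x‖ := real_inner_le_norm _ _
      rw [h1, mul_one] at h4
      nlinarith
    -- N positive
    have hNpos : 0 < N := by
      have hSinv0 : Sinv ≠ 0 := by
        intro h0
        have : Sinv ⟨u0, hu0K⟩ = 0 := by rw [h0]; rfl
        have h2 : S (Sinv ⟨u0, hu0K⟩) = (⟨u0, hu0K⟩ : K) := hSSinv _
        rw [this, map_zero] at h2
        have : u0 = 0 := by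
          have := congrArg Subtype.val h2
          simpa using this.symm
        rw [this, norm_zero] at hu0
        norm_num at hu0
      rw [hN]
      exact lt_of_le_of_ne (ContinuousLinearMap.opNorm_nonneg Sinv)
        (fun h => hSinv0 ((ContinuousLinearMap.opNorm_zero_iff Sinv).1 h.symm))
    -- pointwise lower bound N⁻¹ ≤ ‖A x‖^2
    have hptA : ∀ x, x ∈ K → ‖x‖ = 1 → N⁻¹ ≤ ‖A x‖ ^ 2 := by
      intro x hx h1
      set X : K := ⟨x, hx⟩ with hX
      set V : K := Sinv X with hV
      have hSV : S V = X := hSSinv X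
      have hXn : ‖X‖ = 1 := h1
      have hinner1 : ⟪A (V : H1), A x⟫ = 1 := by
        calc ⟪A (V : H1), A x⟫ = ⟪T (V : H1), x⟫ := (hinner _ _).symm
          _ = ⟪((S V : K) : H1), x⟫ := by rw [hSapp]
          _ = ⟪x, x⟫ := by rw [hSV]
          _ = 1 := by rw [real_inner_self_eq_norm_mul_norm, h1, mul_one]
      have hAV : ‖A (V : H1)‖ ^ 2 ≤ N := by
        have e1 : ‖A (V : H1)‖ ^ 2 = ⟪T (V : H1), (V : H1)⟫ := by
          rw [hinner, real_inner_self_eq_norm_sq]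
        have e2 : ⟪T (V : H1), (V : H1)⟫ = ⟪x, (V : H1)⟫ := by
          rw [← hSapp, hSV]
        have e3 : ⟪x, (V : H1)⟫ ≤ ‖x‖ * ‖(V : H1)‖ := real_inner_le_norm _ _
        have e4 : ‖(V : H1)‖ = ‖V‖ := rfl
        have e5 : ‖V‖ ≤ N * ‖X‖ := by
          rw [hV, hN]
          exact Sinv.le_opNorm X
        rw [hXn, mul_one] at e5
        rw [e1, e2]
        calc ⟪x, (V : H1)⟫ ≤ ‖x‖ * ‖(V : H1)‖ := e3
          _ = ‖V‖ := by rw [h1, one_mul, e4]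
          _ ≤ N := e5
      have hCS : 1 ≤ ‖A (V : H1)‖ * ‖A x‖ := hinner1 ▸ real_inner_le_norm _ _
      exact StmtAux.realaux hNpos hCS hAV (norm_nonneg _) (norm_nonneg _)
    -- c^2 ≥ N⁻¹
    have hcN : N⁻¹ ≤ c ^ 2 := by
      have hsq : Real.sqrt N⁻¹ ≤ c := by
        apply le_csInf hneA
        rintro _ ⟨x, ⟨hx, h1⟩, rfl⟩
        have := hptA x hx h1
        calc Real.sqrt N⁻¹ ≤ Real.sqrt (‖A x‖ ^ 2) := Real.sqrt_le_sqrt this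
          _ = ‖A x‖ := Real.sqrt_sq (norm_nonneg _)
      calc N⁻¹ = (Real.sqrt N⁻¹) ^ 2 := (Real.sq_sqrt (by positivity)).symm
        _ ≤ c ^ 2 := by nlinarith [Real.sqrt_nonneg N⁻¹]
    -- m ≤ N⁻¹
    have hmN : m ≤ N⁻¹ := by
      by_contra hcon
      push_neg at hcon
      have hm_pos : 0 < m := lt_trans (by positivity) hcon
      have hinvm : m⁻¹ < N := by
        have := (inv_lt_inv₀ hm_pos (by positivity)).2 hcon
        rwa [inv_inv] at this
      obtain ⟨r, hr1, hr2⟩ := exists_between hinvm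
      have hr0 : 0 < r := lt_trans (by positivity) hr1
      have hex : ∃ y : K, r * ‖y‖ < ‖Sinv y‖ := by
        by_contra hall
        push_neg at hall
        have : N ≤ r := by
          rw [hN]
          exact Sinv.opNorm_le_bound hr0.le (fun y => by
            have := hall y; linarith)
        linarith
      obtain ⟨y, hy⟩ := hex
      set V : K := Sinv y with hV
      have hVn : 0 < ‖V‖ := by
        calc (0:ℝ) ≤ r * ‖y‖ := mul_nonneg hr0.le (norm_nonneg _)
          _ < ‖Sinv y‖ := hy
          _ = ‖V‖ := by rw [hV]
      have hSV : S V = y := hSSinv y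
      set u : K := ‖V‖⁻¹ • V with hu
      have hun : ‖u‖ = 1 := by
        rw [hu, norm_smul, norm_inv, norm_norm, inv_mul_cancel₀ hVn.ne']
      have huK : (u : H1) ∈ (LinearMap.ker (T : H1 →ₗ[ℝ] H1))ᗮ := by rw [hker2]; exact u.2
      have helt : ‖T (u : H1)‖ ∈ sT := ⟨(u : H1), ⟨huK, hun⟩, rfl⟩
      have hval : ‖T (u : H1)‖ = ‖V‖⁻¹ * ‖y‖ := by
        have : T (u : H1) = ((S u : K) : H1) := (hSapp u).symm
        rw [this]
        have : S u = ‖V‖⁻¹ • y := by rw [hu, map_smul, hSV]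
        rw [this]
        have : ((‖V‖⁻¹ • y : K) : H1) = ‖V‖⁻¹ • (y : H1) := rfl
        rw [this, norm_smul, norm_inv, norm_norm]
        rfl
      have h1' : r * ‖y‖ < ‖V‖ := by
        calc r * ‖y‖ < ‖Sinv y‖ := hy
          _ = ‖V‖ := by rw [hV]
      have hlt : ‖V‖⁻¹ * ‖y‖ < r⁻¹ := StmtAux.realaux2 hr0 hVn h1' (norm_nonneg _)
      have : m < m := by
        calc m ≤ ‖T (u : H1)‖ := csInf_le hbddT helt
          _ = ‖V‖⁻¹ * ‖y‖ := hval
          _ < r⁻¹ := hlt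
          _ < m := by
            have := (inv_lt_inv₀ hr0 (by positivity)).2 hr1
            rwa [inv_inv] at this
      exact lt_irrefl m this
    -- conclusion
    have hfinal : m = c ^ 2 := le_antisymm (hmN.trans hcN) hmc2
    have : minNorm A = Real.sqrt (minNorm T) := by
      show c = Real.sqrt m
      rw [hfinal]
      exact (Real.sqrt_sq hc_pos.le).symm
    exact this
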